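/- In the greedy disaggregation algorithm (Algorithm GetDisaggregation), after processing index b the invariant ∑_{i=1}^{b} Q̂(R, v_i) = ∑_{R' ∈ 𝒜_b} Q(R') holds, where 𝒜_b is the maintained set of pairwise customer-disjoint contiguous subroutes, 𝒜_0 = ∅, and 𝒜_b = 𝒜_{a-1} ∪ {(v_a,...,v_b)} when Δ_b > 0 with a the chosen argmax, and 𝒜_b = 𝒜_{b-1} otherwise. -/

import Mathlib

lemma take_sub_take {V : Type*} (l : List V) {m n : ℕ} (h : m ≤ n) :
    l.take m ⊆ l.take n := by
  have : l.take m = (l.take n).take m := by rw [List.take_take, min_eq_left h]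
  rw [this]; exact List.take_subset _ _

lemma drop_take_sub_take {V : Type*} (l : List V) (m k : ℕ) :
    (l.drop m).take k ⊆ l.take (m + k) := by
  have : (l.drop m).take k = (l.take (m+k)).drop m := by
    rw [List.drop_take]; congr 1; omega
  rw [this]; exact List.drop_subset _ _



/-- Invariant of the greedy disaggregation algorithm: after processing index `b`,
`∑_{i<b} Q̂(R,vᵢ) = ∑_{R' ∈ 𝒜_b} Q R'`, where `𝒜_0 = ∅` and
`𝒜_{b+1} = 𝒜_{a b} ∪ {(v_{a b},…,v_b)}` if `Δ_b > 0` (with `a b` the chosen argmax), and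
`𝒜_{b+1} = 𝒜_b` otherwise. -/
theorem stmt8 {V : Type*} [DecidableEq V] (Q : List V → ℚ)
    (R : List V) (hnd : R.Nodup)
    (g : ℕ → ℚ) (a : ℕ → ℕ)
    (ha_le : ∀ b, a b ≤ b)
    (ha_max : ∀ b < R.length, ∀ a' ≤ b,
      Q ((R.drop a').take (b + 1 - a')) - ∑ i ∈ Finset.Ico a' b, g i ≤
        Q ((R.drop (a b)).take (b + 1 - a b)) - ∑ i ∈ Finset.Ico (a b) b, g i)
    (hg : ∀ b < R.length, g b =
      max (Q ((R.drop (a b)).take (b + 1 - a b)) - ∑ i ∈ Finset.Ico (a b) b, g i) 0)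
    (A : ℕ → Finset (List V))
    (hA0 : A 0 = ∅)
    (hA : ∀ b < R.length, A (b + 1) =
      if 0 < Q ((R.drop (a b)).take (b + 1 - a b)) - ∑ i ∈ Finset.Ico (a b) b, g i
      then insert ((R.drop (a b)).take (b + 1 - a b)) (A (a b))
      else A b) :
    ∀ n ≤ R.length, ∑ i ∈ Finset.range n, g i = ∑ R' ∈ A n, Q R' := by
  suffices H : ∀ n, n ≤ R.length →
      (∑ i ∈ Finset.range n, g i = ∑ R' ∈ A n, Q R') ∧
      (∀ L ∈ A n, ∀ v ∈ L, v ∈ R.take n) by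
    exact fun n hn => (H n hn).1
  intro n
  induction n using Nat.strong_induction_on with
  | _ n IH =>
    match n with
    | 0 => intro _; simp [hA0]
    | b + 1 =>
      intro hb1
      have hb : b < R.length := hb1
      set S := (R.drop (a b)).take (b + 1 - a b) with hS
      set Δ := Q S - ∑ i ∈ Finset.Ico (a b) b, g i with hΔ
      have hgb : g b = max Δ 0 := hg b hb
      rw [hA b hb]
      by_cases hpos : 0 < Δ
      · rw [if_pos hpos]
        have hab : a b ≤ b := ha_le b
        have IHa := IH (a b) (by omega) (by omega)
        -- key: R[b] ∈ S but R[b] ∉ every member of A (a b)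
        have hmemS : R[b] ∈ S := by
          have hlen : b - a b < S.length := by
            simp only [hS, List.length_take, List.length_drop]
            omega
          have : S[b - a b]'hlen = R[b] := by
            simp only [hS]
            rw [List.getElem_take, List.getElem_drop]
            congr 1; omega
          rw [← this]; exact List.getElem_mem _
        have hnot : S ∉ A (a b) := by
          intro hin
          have : R[b] ∈ R.take (a b) := IHa.2 S hin R[b] hmemS
          obtain ⟨i, hi, hieq⟩ := List.getElem_of_mem this
          have hi' : i < a b := by
            have := hi; simp at this; omega
          rw [List.getElem_take] at hieq
          have : i = b := by
            apply (List.Nodup.getElem_inj_iff hnd).mp hieq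
          omega
        constructor
        · rw [Finset.sum_insert hnot]
          have hsplit : ∑ i ∈ Finset.range (b + 1), g i =
              ∑ i ∈ Finset.range (a b), g i + ∑ i ∈ Finset.Ico (a b) (b + 1), g i := by
            rw [Finset.range_eq_Ico, Finset.range_eq_Ico]
            exact (Finset.sum_Ico_consecutive g (by omega : 0 ≤ a b) (by omega : a b ≤ b + 1)).symm
          rw [hsplit, IHa.1, Finset.sum_Ico_succ_top hab, hgb,
            max_eq_left hpos.le, hΔ]
          ring
        · intro L hL v hv
          rcases Finset.mem_insert.mp hL with h | h
          · subst h
            have : v ∈ R.take (a b + (b + 1 - a b)) := drop_take_sub_take R (a b) _ (hS ▸ hv)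
            have heq : a b + (b + 1 - a b) = b + 1 := by omega
            rwa [heq] at this
          · exact take_sub_take R (by omega) (IHa.2 L h v hv)
      · rw [if_neg hpos]
        have IHb := IH b (by omega) (by omega)
        constructor
        · rw [Finset.sum_range_succ, IHb.1, hgb, max_eq_right (le_of_not_gt hpos)]
          ring
        · intro L hL v hv
          exact take_sub_take R (by omega) (IHb.2 L hL v hv)
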